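/- Consider the modified flow X'(t) = F(X(t)) with F(x) = -f'(x) + βη f'(x) f''(x), for f ∈ C⁴(ℝ) and β ∈ ℝ. Then X(t+η) = X(t) - η f'(X(t)) + η² (β + 1/2) f'(X(t)) f''(X(t)) + O(η³). In particular, the choice β = -1/2 makes the flow agree with the GD step x - ηf'(x) up to O(η³), while β = 0 and β = 1/2 agree up to O(η²). -/

import Mathlib

open Set

-- derivative abbreviations and the vector field with its y-derivatives
noncomputable def AA (f : ℝ → ℝ) (β η y : ℝ) : ℝ :=
  -(deriv f y) + β * η * deriv f y * deriv (deriv f) y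

noncomputable def BB (f : ℝ → ℝ) (β η y : ℝ) : ℝ :=
  -(deriv (deriv f) y) + (β * η * deriv (deriv f) y * deriv (deriv f) y
    + β * η * deriv f y * deriv (deriv (deriv f)) y)

noncomputable def CC (f : ℝ → ℝ) (β η y : ℝ) : ℝ :=
  -(deriv (deriv (deriv f)) y) + β * η *
    (3 * deriv (deriv f) y * deriv (deriv (deriv f)) y
      + deriv f y * deriv (deriv (deriv (deriv f))) y)

noncomputable def GG (f : ℝ → ℝ) (β η y : ℝ) : ℝ :=
  CC f β η y * AA f β η y * AA f β η y + BB f β η y * (BB f β η y * AA f β η y)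

lemma derivs_facts (f : ℝ → ℝ) (hf : ContDiff ℝ 4 f) :
    (∀ y, HasDerivAt (deriv f) (deriv (deriv f) y) y) ∧
    (∀ y, HasDerivAt (deriv (deriv f)) (deriv (deriv (deriv f)) y) y) ∧
    (∀ y, HasDerivAt (deriv (deriv (deriv f))) (deriv (deriv (deriv (deriv f))) y) y) ∧
    Continuous (deriv f) ∧ Continuous (deriv (deriv f)) ∧
    Continuous (deriv (deriv (deriv f))) ∧ Continuous (deriv (deriv (deriv (deriv f)))) := by
  have h4 : ContDiff ℝ ((3 : ℕ) + 1) f := by exact_mod_cast hf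
  have h3 : ContDiff ℝ 3 (deriv f) := (contDiff_succ_iff_deriv.mp h4).2.2
  have h3' : ContDiff ℝ ((2 : ℕ) + 1) (deriv f) := by exact_mod_cast h3
  have h2 : ContDiff ℝ 2 (deriv (deriv f)) := (contDiff_succ_iff_deriv.mp h3').2.2
  have h2' : ContDiff ℝ ((1 : ℕ) + 1) (deriv (deriv f)) := by exact_mod_cast h2
  have h1 : ContDiff ℝ 1 (deriv (deriv (deriv f))) := (contDiff_succ_iff_deriv.mp h2').2.2
  refine ⟨fun y => ((h3.differentiable (by norm_num)) y).hasDerivAt,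
    fun y => ((h2.differentiable (by norm_num)) y).hasDerivAt,
    fun y => ((h1.differentiable (by norm_num)) y).hasDerivAt,
    h3.continuous, h2.continuous, h1.continuous, h1.continuous_deriv (by norm_num)⟩

lemma hasDerivAt_AA (f : ℝ → ℝ) (hf : ContDiff ℝ 4 f) (β η y : ℝ) :
    HasDerivAt (AA f β η) (BB f β η y) y := by
  obtain ⟨h1, h2, h3, -⟩ := derivs_facts f hf
  have H := ((h1 y).neg).add (((h1 y).const_mul (β * η)).mul (h2 y))
  exact H.congr_deriv (by simp only [BB])

lemma hasDerivAt_BB (f : ℝ → ℝ) (hf : ContDiff ℝ 4 f) (β η y : ℝ) :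
    HasDerivAt (BB f β η) (CC f β η y) y := by
  obtain ⟨h1, h2, h3, -⟩ := derivs_facts f hf
  have H := ((h2 y).neg).add ((((h2 y).const_mul (β * η)).mul (h2 y)).add
    (((h1 y).const_mul (β * η)).mul (h3 y)))
  exact H.congr_deriv (by simp only [CC]; ring)

/-- Third-order Taylor bound with a crude constant. -/
lemma taylor3 {g g1 g2 g3 : ℝ → ℝ} {a b M : ℝ} (hab : a ≤ b)
    (h1 : ∀ t ∈ Icc a b, HasDerivAt g (g1 t) t)
    (h2 : ∀ t ∈ Icc a b, HasDerivAt g1 (g2 t) t)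
    (h3 : ∀ t ∈ Icc a b, HasDerivAt g2 (g3 t) t)
    (hM : ∀ t ∈ Icc a b, |g3 t| ≤ M) :
    |g b - (g a + (b - a) * g1 a + (b - a) ^ 2 / 2 * g2 a)| ≤ M / 2 * (b - a) ^ 3 := by
  set φ : ℝ → ℝ := fun t => g b - g t - (b - t) * g1 t - (b - t) ^ 2 / 2 * g2 t with hφ
  have hM0 : 0 ≤ M := le_trans (abs_nonneg _) (hM a ⟨le_refl a, hab⟩)
  have hder : ∀ t ∈ Icc a b, HasDerivAt φ (-((b - t) ^ 2 / 2 * g3 t)) t := by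
    intro t ht
    have hbt : HasDerivAt (fun t : ℝ => b - t) (-1) t := by
      simpa using (hasDerivAt_id t).const_sub b
    have H := (((hasDerivAt_const t (g b)).sub (h1 t ht)).sub
      (hbt.mul (h2 t ht))).sub ((((hbt.pow 2).div_const 2).mul (h3 t ht)))
    refine H.congr_deriv ?_
    push_cast [Pi.pow_apply]
    ring
  have bound : ∀ t ∈ Icc a b, ‖-((b - t) ^ 2 / 2 * g3 t)‖ ≤ (b - a) ^ 2 / 2 * M := by
    intro t ht
    rw [norm_neg, Real.norm_eq_abs, abs_mul]
    have h1' : |(b - t) ^ 2 / 2| = (b - t) ^ 2 / 2 := abs_of_nonneg (by positivity)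
    rw [h1']
    have hg := hM t ht
    have hbtle : (b - t) ^ 2 ≤ (b - a) ^ 2 := by nlinarith [ht.1, ht.2]
    nlinarith [abs_nonneg (g3 t)]
  have key := (convex_Icc a b).norm_image_sub_le_of_norm_hasDerivWithin_le
    (fun t ht => (hder t ht).hasDerivWithinAt) bound ⟨hab, le_refl b⟩ ⟨le_refl a, hab⟩
  have hφb : φ b = 0 := by simp [hφ]
  have hφa : φ a = g b - (g a + (b - a) * g1 a + (b - a) ^ 2 / 2 * g2 a) := by
    simp [hφ]; ring
  rw [hφb, hφa] at key
  simp only [zero_sub, sub_zero, norm_neg, Real.norm_eq_abs] at key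
  calc |g b - (g a + (b - a) * g1 a + (b - a) ^ 2 / 2 * g2 a)|
      ≤ (b - a) ^ 2 / 2 * M * |a - b| := key
    _ = M / 2 * (b - a) ^ 3 := by
        rw [abs_sub_comm, abs_of_nonneg (by linarith)]; ring

/-- Modified flow X' = -f'(X) + βη f'(X) f''(X):
X(t₀+η) = x - ηf'(x) + η²(β+1/2) f'(x) f''(x) + O(η³); in particular β = -1/2
matches the GD step up to O(η³), while β = 0 and β = 1/2 match up to O(η²). -/
theorem stmt10 (f : ℝ → ℝ) (hf : ContDiff ℝ 4 f) (β : ℝ)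
    (X : ℝ → ℝ → ℝ) (t₀ x : ℝ)
    (hinit : ∀ η, X η t₀ = x)
    (hODE : ∀ η t, HasDerivAt (X η)
      (-(deriv f (X η t)) + β * η * deriv f (X η t) * deriv (deriv f) (X η t)) t) :
    (∃ C > 0, ∃ η₀ > 0, ∀ η : ℝ, 0 < η → η < η₀ →
      |X η (t₀ + η) - (x - η * deriv f x
        + η ^ 2 * (β + 1 / 2) * deriv f x * deriv (deriv f) x)| ≤ C * η ^ 3) ∧
    (β = -(1 / 2) → ∃ C > 0, ∃ η₀ > 0, ∀ η : ℝ, 0 < η → η < η₀ →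
      |X η (t₀ + η) - (x - η * deriv f x)| ≤ C * η ^ 3) ∧
    ((β = 0 ∨ β = 1 / 2) → ∃ C > 0, ∃ η₀ > 0, ∀ η : ℝ, 0 < η → η < η₀ →
      |X η (t₀ + η) - (x - η * deriv f x)| ≤ C * η ^ 2) := by
  obtain ⟨hD1, hD2, hD3, hc1, hc2, hc3, hc4⟩ := derivs_facts f hf
  -- restate the ODE with AA
  have hODE' : ∀ η t, HasDerivAt (X η) (AA f β η (X η t)) t := fun η t => hODE η t
  -- compact set for bounds
  set P : Set (ℝ × ℝ) := Icc (0 : ℝ) 1 ×ˢ Icc (x - 1) (x + 1) with hP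
  have hPc : IsCompact P := (isCompact_Icc).prod isCompact_Icc
  have hAAcont : Continuous (fun p : ℝ × ℝ => AA f β p.1 p.2) := by
    simp only [AA]; fun_prop
  have hBBcont : Continuous (fun p : ℝ × ℝ => BB f β p.1 p.2) := by
    simp only [BB]; fun_prop
  have hCCcont : Continuous (fun p : ℝ × ℝ => CC f β p.1 p.2) := by
    simp only [CC]; fun_prop
  have hGGcont : Continuous (fun p : ℝ × ℝ => GG f β p.1 p.2) := by
    simp only [GG]; fun_prop
  obtain ⟨M₁, hM₁⟩ := hPc.exists_bound_of_continuousOn hAAcont.continuousOn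
  obtain ⟨M, hM⟩ := hPc.exists_bound_of_continuousOn hGGcont.continuousOn
  set M₁' : ℝ := max M₁ 1 with hM₁'def
  have hM₁'pos : 0 < M₁' := lt_of_lt_of_le one_pos (le_max_right _ _)
  set M' : ℝ := max M 0 with hM'def
  have hM'0 : 0 ≤ M' := le_max_right _ _
  set η₀ : ℝ := min 1 (1 / M₁') with hη₀def
  have hη₀pos : 0 < η₀ := lt_min one_pos (by positivity)
  have hη₀le1 : η₀ ≤ 1 := min_le_left _ _
  -- confinement
  have hconf : ∀ η : ℝ, 0 < η → η < η₀ → ∀ t ∈ Icc t₀ (t₀ + η), |X η t - x| ≤ 1 := by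
    intro η hη hηη₀
    have hη1 : η ≤ 1 := le_of_lt (lt_of_lt_of_le hηη₀ hη₀le1)
    by_contra hcon
    push_neg at hcon
    obtain ⟨ts, hts, hts1⟩ := hcon
    have hXc : Continuous (X η) := by
      rw [continuous_iff_continuousAt]; exact fun t => (hODE' η t).continuousAt
    set K : Set ℝ := {t | t ∈ Icc t₀ (t₀ + η) ∧ 1 ≤ |X η t - x|} with hKdef
    have hKclosed : IsClosed K := by
      apply IsClosed.inter isClosed_Icc
      exact isClosed_le continuous_const ((hXc.sub continuous_const).abs)
    have hKne : K.Nonempty := ⟨ts, hts, le_of_lt hts1⟩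
    have hKbdd : BddBelow K := ⟨t₀, fun t ht => ht.1.1⟩
    set t₁ : ℝ := sInf K with ht₁def
    have ht₁K : t₁ ∈ K := hKclosed.csInf_mem hKne hKbdd
    have ht₁I : t₁ ∈ Icc t₀ (t₀ + η) := ht₁K.1
    have ht₁ge : 1 ≤ |X η t₁ - x| := ht₁K.2
    have ht₀lt : t₀ < t₁ := by
      rcases lt_or_eq_of_le ht₁I.1 with h | h
      · exact h
      · exfalso; rw [← h, hinit η] at ht₁ge; simp at ht₁ge; linarith
    have hIco : ∀ s ∈ Ico t₀ t₁, |X η s - x| ≤ 1 := by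
      intro s hs
      by_contra hgt
      push_neg at hgt
      have hsK : s ∈ K := ⟨⟨hs.1, le_trans (le_of_lt hs.2) ht₁I.2⟩, le_of_lt hgt⟩
      exact absurd (csInf_le hKbdd hsK) (not_le.mpr hs.2)
    have hIcc : ∀ s ∈ Icc t₀ t₁, |X η s - x| ≤ 1 := by
      have hcl : IsClosed {s : ℝ | |X η s - x| ≤ 1} :=
        isClosed_le ((hXc.sub continuous_const).abs) continuous_const
      have hsub : Icc t₀ t₁ ⊆ {s : ℝ | |X η s - x| ≤ 1} := by
        rw [← closure_Ico (ne_of_lt ht₀lt)]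
        exact hcl.closure_subset_iff.mpr hIco
      exact fun s hs => hsub hs
    have hbound : ∀ s ∈ Icc t₀ t₁, ‖AA f β η (X η s)‖ ≤ M₁' := by
      intro s hs
      have hmem : ((η, X η s) : ℝ × ℝ) ∈ P := by
        constructor
        · exact ⟨le_of_lt hη, hη1⟩
        · have := hIcc s hs
          rw [abs_le] at this
          constructor <;> simp <;> linarith [this.1, this.2]
      exact le_trans (hM₁ _ hmem) (le_max_left _ _)
    have hmvt := (convex_Icc t₀ t₁).norm_image_sub_le_of_norm_hasDerivWithin_le
      (fun s hs => (hODE' η s).hasDerivWithinAt) hbound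
      (⟨le_refl t₀, le_of_lt ht₀lt⟩ : t₀ ∈ Icc t₀ t₁) ⟨le_of_lt ht₀lt, le_refl t₁⟩
    rw [hinit η, Real.norm_eq_abs, Real.norm_eq_abs] at hmvt
    have habs : |t₁ - t₀| = t₁ - t₀ := abs_of_nonneg (by linarith)
    rw [habs] at hmvt
    have h2 : t₁ - t₀ ≤ η := by linarith [ht₁I.2]
    have h3 : M₁' * (t₁ - t₀) ≤ M₁' * η :=
      mul_le_mul_of_nonneg_left h2 (le_of_lt hM₁'pos)
    have h4 : M₁' * η < 1 := by
      have hlt : η < 1 / M₁' := lt_of_lt_of_le hηη₀ (min_le_right _ _)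
      calc M₁' * η < M₁' * (1 / M₁') := mul_lt_mul_of_pos_left hlt hM₁'pos
        _ = 1 := by field_simp
    linarith [ht₁ge, hmvt]
  -- main estimate
  set e0 : ℝ := (-(β * deriv f x * (deriv (deriv f) x) ^ 2)
      - β * deriv f x * ((deriv (deriv f) x) ^ 2 + deriv f x * deriv (deriv (deriv f)) x)) / 2
    with he0def
  set e1 : ℝ := β ^ 2 * deriv f x * deriv (deriv f) x *
      ((deriv (deriv f) x) ^ 2 + deriv f x * deriv (deriv (deriv f)) x) / 2 with he1def
  set C : ℝ := M' / 2 + |e0| + |e1| + 1 with hCdef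
  have hCpos : 0 < C := by positivity
  have hmain : ∀ η : ℝ, 0 < η → η < η₀ →
      |X η (t₀ + η) - (x - η * deriv f x
        + η ^ 2 * (β + 1 / 2) * deriv f x * deriv (deriv f) x)| ≤ C * η ^ 3 := by
    intro η hη hηη₀
    have hη1 : η ≤ 1 := le_of_lt (lt_of_lt_of_le hηη₀ hη₀le1)
    have hab : t₀ ≤ t₀ + η := by linarith
    have hconfη := hconf η hη hηη₀
    -- derivatives along the flow
    have h1 : ∀ t ∈ Icc t₀ (t₀ + η), HasDerivAt (X η) (AA f β η (X η t)) t :=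
      fun t _ => hODE' η t
    have h2 : ∀ t ∈ Icc t₀ (t₀ + η), HasDerivAt (fun t => AA f β η (X η t))
        (BB f β η (X η t) * AA f β η (X η t)) t := by
      intro t _
      exact (hasDerivAt_AA f hf β η (X η t)).comp t (hODE' η t)
    have h3 : ∀ t ∈ Icc t₀ (t₀ + η), HasDerivAt
        (fun t => BB f β η (X η t) * AA f β η (X η t)) (GG f β η (X η t)) t := by
      intro t _
      have hb := (hasDerivAt_BB f hf β η (X η t)).comp t (hODE' η t)
      have ha := (hasDerivAt_AA f hf β η (X η t)).comp t (hODE' η t)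
      have := hb.mul ha
      exact this.congr_deriv (by simp only [GG, Function.comp])
    have hMb : ∀ t ∈ Icc t₀ (t₀ + η), |GG f β η (X η t)| ≤ M' := by
      intro t ht
      have hmem : ((η, X η t) : ℝ × ℝ) ∈ P := by
        constructor
        · exact ⟨le_of_lt hη, hη1⟩
        · have := hconfη t ht
          rw [abs_le] at this
          constructor <;> simp <;> linarith [this.1, this.2]
      exact le_trans (hM _ hmem) (le_max_left _ _)
    have htay := taylor3 hab h1 h2 h3 hMb
    rw [hinit η] at htay
    have hsub : t₀ + η - t₀ = η := by ring
    rw [hsub] at htay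
    -- algebraic identity
    have hid : (x + η * AA f β η x + η ^ 2 / 2 * (BB f β η x * AA f β η x))
        - (x - η * deriv f x + η ^ 2 * (β + 1 / 2) * deriv f x * deriv (deriv f) x)
        = η ^ 3 * e0 + η ^ 4 * e1 := by
      simp only [AA, BB, he0def, he1def]; ring
    have hη3 : η ^ 4 ≤ η ^ 3 := by
      have h := mul_le_mul_of_nonneg_left hη1 (le_of_lt (pow_pos hη 3))
      calc η ^ 4 = η ^ 3 * η := by ring
        _ ≤ η ^ 3 * 1 := h
        _ = η ^ 3 := by ring
    have hη3pos : (0:ℝ) < η ^ 3 := by positivity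
    calc |X η (t₀ + η) - (x - η * deriv f x
          + η ^ 2 * (β + 1 / 2) * deriv f x * deriv (deriv f) x)|
        ≤ |X η (t₀ + η) - (x + η * AA f β η x + η ^ 2 / 2 * (BB f β η x * AA f β η x))|
          + |(x + η * AA f β η x + η ^ 2 / 2 * (BB f β η x * AA f β η x))
            - (x - η * deriv f x + η ^ 2 * (β + 1 / 2) * deriv f x * deriv (deriv f) x)| := by
          apply abs_sub_le
      _ ≤ M' / 2 * η ^ 3 + (|e0| + |e1|) * η ^ 3 := by
          apply add_le_add htay
          rw [hid]
          calc |η ^ 3 * e0 + η ^ 4 * e1| ≤ |η ^ 3 * e0| + |η ^ 4 * e1| := abs_add_le _ _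
            _ = η ^ 3 * |e0| + η ^ 4 * |e1| := by
                rw [abs_mul, abs_mul, abs_of_nonneg (le_of_lt hη3pos),
                  abs_of_nonneg (by positivity : (0:ℝ) ≤ η ^ 4)]
            _ ≤ η ^ 3 * |e0| + η ^ 3 * |e1| :=
                add_le_add_right (mul_le_mul_of_nonneg_right hη3 (abs_nonneg e1)) _
            _ = (|e0| + |e1|) * η ^ 3 := by ring
      _ = (M' / 2 + (|e0| + |e1|)) * η ^ 3 := by ring
      _ ≤ C * η ^ 3 := by
          apply mul_le_mul_of_nonneg_right _ (le_of_lt hη3pos)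
          rw [hCdef]; linarith
  refine ⟨⟨C, hCpos, η₀, hη₀pos, hmain⟩, ?_, ?_⟩
  · intro hβ
    refine ⟨C, hCpos, η₀, hη₀pos, fun η hη hηη₀ => ?_⟩
    have h := hmain η hη hηη₀
    rw [hβ] at h
    have hz : x - η * deriv f x + η ^ 2 * (-(1 / 2) + 1 / 2) * deriv f x * deriv (deriv f) x
        = x - η * deriv f x := by ring
    rw [hz] at h
    exact h
  · intro _
    set K₂ : ℝ := |(β + 1 / 2) * deriv f x * deriv (deriv f) x| with hK₂def
    refine ⟨C * η₀ + K₂ + 1, by positivity, η₀, hη₀pos, fun η hη hηη₀ => ?_⟩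
    have h := hmain η hη hηη₀
    have hη2pos : (0:ℝ) < η ^ 2 := by positivity
    calc |X η (t₀ + η) - (x - η * deriv f x)|
        ≤ |X η (t₀ + η) - (x - η * deriv f x
            + η ^ 2 * (β + 1 / 2) * deriv f x * deriv (deriv f) x)|
          + |η ^ 2 * (β + 1 / 2) * deriv f x * deriv (deriv f) x| := by
          have : X η (t₀ + η) - (x - η * deriv f x)
              = (X η (t₀ + η) - (x - η * deriv f x
                + η ^ 2 * (β + 1 / 2) * deriv f x * deriv (deriv f) x))
              + η ^ 2 * (β + 1 / 2) * deriv f x * deriv (deriv f) x := by ring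
          rw [this]
          exact abs_add_le _ _
      _ ≤ C * η ^ 3 + η ^ 2 * K₂ := by
          apply add_le_add h
          rw [hK₂def]
          rw [show η ^ 2 * (β + 1 / 2) * deriv f x * deriv (deriv f) x
            = η ^ 2 * ((β + 1 / 2) * deriv f x * deriv (deriv f) x) by ring]
          rw [abs_mul, abs_of_nonneg (le_of_lt hη2pos)]
      _ = (C * η + K₂) * η ^ 2 := by ring
      _ ≤ (C * η₀ + K₂ + 1) * η ^ 2 := by
          apply mul_le_mul_of_nonneg_right _ (le_of_lt hη2pos)
          have hCη : C * η ≤ C * η₀ := mul_le_mul_of_nonneg_left (le_of_lt hηη₀) (le_of_lt hCpos)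
          linarith
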